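/- Let n ≥ 2 and let z ∈ ℂⁿ with z ≠ 0. Then there exists a complex n×n matrix A with AᵀA = 1 and det A = 1 such that, writing A z = x + i p with x, p ∈ ℝⁿ, the constraint xⱼpₖ − xₖpⱼ = 0 holds for all j,k, if and only если Σⱼ zⱼ² ≠ 0. In other words, a nonzero vector of ℂⁿ lies in the saturation of the SO(n)-constraint surface under the SO(n,ℂ)-action exactly when it does not lie on the null cone D₀ = {z : Σⱼ zⱼ² = 0}. -/

import Mathlib

open Matrix LinearMap Module

private lemma sumsq_zero_aux (N : ℕ) (w : Fin N → ℂ)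
    (hc : ∀ j k, (w j).re * (w k).im - (w k).re * (w j).im = 0)
    (hs : ∑ j, w j ^ 2 = 0) : w = 0 := by
  set x : Fin N → ℝ := fun j => (w j).re with hx
  set p : Fin N → ℝ := fun j => (w j).im with hp
  have hre : ∑ j, (x j * x j - p j * p j) = 0 := by
    have := congrArg Complex.re hs
    simpa [Complex.re_sum, sq, Complex.mul_re] using this
  have him : ∑ j, x j * p j = 0 := by
    have h2 := congrArg Complex.im hs
    simp only [Complex.im_sum, sq, Complex.mul_im, Complex.zero_im] at h2
    have h3 : (2:ℝ) * ∑ j, x j * p j = 0 := by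
      rw [Finset.mul_sum]
      calc ∑ j, 2 * (x j * p j) = ∑ j, ((w j).re * (w j).im + (w j).im * (w j).re) := by
            apply Finset.sum_congr rfl; intro j _; ring
        _ = 0 := h2
    linarith
  have key : (∑ j, x j * p j) * (∑ j, x j * p j)
      = (∑ j, x j * x j) * (∑ j, p j * p j) := by
    rw [Finset.sum_mul_sum, Finset.sum_mul_sum]
    apply Finset.sum_congr rfl; intro j _
    apply Finset.sum_congr rfl; intro k _
    have e := hc j k
    linear_combination (-(x j * p k)) * e
  have hsub : ∑ j, x j * x j = ∑ j, p j * p j := by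
    have : (∑ j, x j * x j) - (∑ j, p j * p j) = 0 := by
      rw [← Finset.sum_sub_distrib]; exact hre
    linarith
  have hxx : ∑ j, x j * x j = 0 := by nlinarith [key, hsub, him]
  have hpp : ∑ j, p j * p j = 0 := by linarith
  have hx0 : ∀ j ∈ Finset.univ, x j * x j = 0 :=
    (Finset.sum_eq_zero_iff_of_nonneg (fun i _ => mul_self_nonneg (x i))).mp hxx
  have hp0 : ∀ j ∈ Finset.univ, p j * p j = 0 :=
    (Finset.sum_eq_zero_iff_of_nonneg (fun i _ => mul_self_nonneg (p i))).mp hpp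
  funext j
  exact Complex.ext (mul_self_eq_zero.mp (hx0 j (Finset.mem_univ j)))
    (mul_self_eq_zero.mp (hp0 j (Finset.mem_univ j)))

/-- A nonzero `z ∈ ℂⁿ` (`n ≥ 2`) can be moved by some `A ∈ SO(n,ℂ)` onto the
`SO(n)` constraint surface (writing `A z = x + i p`, the constraints
`xⱼpₖ − xₖpⱼ = 0` hold) if and only if `Σⱼ zⱼ² ≠ 0`, i.e. exactly when `z` does
not lie on the null cone `D₀`. -/
theorem stmt7 (n : ℕ) (hn : 2 ≤ n) (z : Fin n → ℂ) (hz : z ≠ 0) :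
    (∃ A : Matrix (Fin n) (Fin n) ℂ, Aᵀ * A = 1 ∧ A.det = 1 ∧
        ∀ j k : Fin n,
          (A.mulVec z j).re * (A.mulVec z k).im
            - (A.mulVec z k).re * (A.mulVec z j).im = 0) ↔
      (∑ j, z j ^ 2) ≠ 0 := by
  obtain ⟨m, rfl⟩ : ∃ m, n = m + 1 := ⟨n - 1, by omega⟩
  have hm : 1 ≤ m := by omega
  constructor
  · rintro ⟨A, hAtA, hdet, hcon⟩ h0
    set w := A.mulVec z with hw
    have hback : Aᵀ *ᵥ w = z := by
      rw [hw, Matrix.mulVec_mulVec, hAtA, Matrix.one_mulVec]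
    have hww : w ⬝ᵥ w = z ⬝ᵥ z := by
      calc w ⬝ᵥ w = w ᵥ* A ⬝ᵥ z := dotProduct_mulVec w A z
        _ = (Aᵀ *ᵥ w) ⬝ᵥ z := by rw [mulVec_transpose]
        _ = z ⬝ᵥ z := by rw [hback]
    have hsw : ∑ j, w j ^ 2 = 0 := by
      have h1 : ∑ j, w j ^ 2 = w ⬝ᵥ w := by simp [dotProduct, sq]
      have h2 : ∑ j, z j ^ 2 = z ⬝ᵥ z := by simp [dotProduct, sq]
      rw [h1, hww, ← h2, h0]
    have hw0 : w = 0 := sumsq_zero_aux _ w hcon hsw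
    apply hz
    rw [← hback, hw0, Matrix.mulVec_zero]
  · intro hc
    -- the standard bilinear form
    set B := Matrix.toBilin' (1 : Matrix (Fin (m+1)) (Fin (m+1)) ℂ) with hB
    have hBapp : ∀ u v : Fin (m+1) → ℂ, B u v = ∑ k, u k * v k := by
      intro u v
      rw [hB, Matrix.toBilin'_apply', Matrix.one_mulVec]
      rfl
    have hsymm : B.IsSymm := by
      constructor; intro u v; simp only [RingHom.id_apply, hBapp, mul_comm]
    have hrefl := hsymm.isRefl
    have hnd : B.Nondegenerate := by
      refine (LinearMap.IsRefl.nondegenerate_iff_separatingLeft hrefl).mpr ?_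
      intro u hu
      funext k
      have := hu (Pi.single k 1)
      rw [hBapp] at this
      simpa [Pi.single_apply, mul_comm] using this
    have hzz : ¬ B.IsOrtho z z := by
      intro h
      apply hc
      have h' : ∑ k, z k * z k = 0 := by rw [← hBapp]; exact h
      calc ∑ j, z j ^ 2 = ∑ k, z k * z k := by simp [sq]
        _ = 0 := h'
    have hcompl := LinearMap.BilinForm.isCompl_span_singleton_orthogonal hzz
    set W := B.orthogonal (Submodule.span ℂ {z}) with hW
    have hdisj : Disjoint W (B.orthogonal W) := by
      rw [hW, LinearMap.BilinForm.orthogonal_orthogonal hnd hrefl]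
      exact hcompl.disjoint.symm
    have hndW : (B.restrict W).Nondegenerate :=
      LinearMap.BilinForm.nondegenerate_restrict_of_disjoint_orthogonal B hrefl hdisj
    have hWsymm : (B.restrict W).IsSymm := by
      constructor; intro u v
      simp only [RingHom.id_apply, LinearMap.BilinForm.restrict_apply,
        LinearMap.domRestrict_apply, hBapp, mul_comm]
    obtain ⟨v, hv⟩ := LinearMap.BilinForm.exists_orthogonal_basis (LinearMap.BilinForm.isSymm_iff.mp hWsymm)
    have hrank : finrank ℂ W = m := by
      have h1 := Submodule.finrank_add_eq_of_isCompl hcompl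
      rw [finrank_span_singleton hz] at h1
      have h2 : finrank ℂ (Fin (m+1) → ℂ) = m + 1 := by simp
      omega
    have hdiag : ∀ i, B (v i : Fin (m+1) → ℂ) (v i : Fin (m+1) → ℂ) ≠ 0 := by
      intro i hzero
      refine LinearMap.BilinForm.iIsOrtho.not_isOrtho_basis_self_of_nondegenerate
        hv hndW i ?_
      show (B.restrict W) (v i) (v i) = 0
      simp only [LinearMap.BilinForm.restrict_apply, LinearMap.domRestrict_apply]
      exact hzero
    -- square roots
    obtain ⟨s, hs⟩ : ∃ s : ℂ, s * s = ∑ j, z j ^ 2 := by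
      obtain ⟨s, hs⟩ := IsAlgClosed.exists_pow_nat_eq (∑ j, z j ^ 2) (n := 2) (by norm_num)
      exact ⟨s, by rw [← sq]; exact hs⟩
    have hs0 : s ≠ 0 := by
      intro h; apply hc; rw [← hs, h, mul_zero]
    have ht : ∀ i, ∃ t : ℂ, t * t = B (v i : Fin (m+1) → ℂ) (v i : Fin (m+1) → ℂ) := by
      intro i
      obtain ⟨t, h⟩ := IsAlgClosed.exists_pow_nat_eq
        (B (v i : Fin (m+1) → ℂ) (v i : Fin (m+1) → ℂ)) (n := 2) (by norm_num)
      exact ⟨t, by rw [← sq]; exact h⟩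
    choose t htt using ht
    have ht0 : ∀ i, t i ≠ 0 := by
      intro i h
      apply hdiag i; rw [← htt i, h, mul_zero]
    -- the index cast
    set e : Fin m → Fin (finrank ℂ W) := Fin.cast hrank.symm with he
    have he_inj : Function.Injective e := fun a b h => by
      simpa [he, Fin.ext_iff] using h
    -- the orthonormal family
    set u : Fin (m+1) → (Fin (m+1) → ℂ) :=
      Fin.cons (s⁻¹ • z) (fun i => (t (e i))⁻¹ • ((v (e i) : Fin (m+1) → ℂ))) with hu
    have hzw : ∀ x : W, ∑ k, z k * (x : Fin (m+1) → ℂ) k = 0 := by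
      intro x
      have hx := LinearMap.BilinForm.mem_orthogonal_iff.mp x.2 z
        (Submodule.mem_span_singleton_self z)
      have h' : B z (x : Fin (m+1) → ℂ) = 0 := hx
      rw [hBapp] at h'
      exact h'
    have horth : ∀ i j, (∑ k, u i k * u j k) = if i = j then 1 else 0 := by
      intro i j
      induction i using Fin.cases with
      | zero =>
        induction j using Fin.cases with
        | zero =>
          simp only [hu, Fin.cons_zero, if_pos rfl, Pi.smul_apply, smul_eq_mul]
          have : ∑ k, s⁻¹ * z k * (s⁻¹ * z k) = s⁻¹ * s⁻¹ * ∑ k, z k * z k := by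
            rw [Finset.mul_sum]; apply Finset.sum_congr rfl; intro k _; ring
          rw [this]
          have h2 : ∑ k, z k * z k = s * s := by
            rw [hs]; apply Finset.sum_congr rfl; intro k _; rw [sq]
          rw [h2]; field_simp; simp
        | succ j =>
          simp only [hu, Fin.cons_zero, Fin.cons_succ, Pi.smul_apply, smul_eq_mul,
            if_neg (Fin.succ_ne_zero j).symm]
          have : ∑ k, s⁻¹ * z k * ((t (e j))⁻¹ * (v (e j) : Fin (m+1) → ℂ) k)
              = s⁻¹ * (t (e j))⁻¹ * ∑ k, z k * (v (e j) : Fin (m+1) → ℂ) k := by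
            rw [Finset.mul_sum]; apply Finset.sum_congr rfl; intro k _; ring
          rw [this, hzw (v (e j)), mul_zero]
      | succ i =>
        induction j using Fin.cases with
        | zero =>
          simp only [hu, Fin.cons_zero, Fin.cons_succ, Pi.smul_apply, smul_eq_mul,
            if_neg (Fin.succ_ne_zero i)]
          have : ∑ k, (t (e i))⁻¹ * (v (e i) : Fin (m+1) → ℂ) k * (s⁻¹ * z k)
              = s⁻¹ * (t (e i))⁻¹ * ∑ k, z k * (v (e i) : Fin (m+1) → ℂ) k := by
            rw [Finset.mul_sum]; apply Finset.sum_congr rfl; intro k _; ring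
          rw [this, hzw (v (e i)), mul_zero]
        | succ j =>
          simp only [hu, Fin.cons_succ, Pi.smul_apply, smul_eq_mul]
          have hfac : ∑ k, (t (e i))⁻¹ * (v (e i) : Fin (m+1) → ℂ) k
                * ((t (e j))⁻¹ * (v (e j) : Fin (m+1) → ℂ) k)
              = (t (e i))⁻¹ * (t (e j))⁻¹
                * ∑ k, (v (e i) : Fin (m+1) → ℂ) k * (v (e j) : Fin (m+1) → ℂ) k := by
            rw [Finset.mul_sum]; apply Finset.sum_congr rfl; intro k _; ring
          rw [hfac]
          by_cases hij : i = j
          · subst hij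
            rw [if_pos rfl]
            have h2 : ∑ k, (v (e i) : Fin (m+1) → ℂ) k * (v (e i) : Fin (m+1) → ℂ) k
                = t (e i) * t (e i) := by rw [htt (e i), hBapp]
            have hne : t (e i) * t (e i) ≠ 0 := mul_ne_zero (ht0 (e i)) (ht0 (e i))
            rw [h2, ← mul_inv, inv_mul_cancel₀ hne]
          · rw [if_neg (by simpa [Fin.ext_iff] using hij)]
            have hne : e i ≠ e j := fun h => hij (he_inj h)
            have h0 : (B.restrict W) (v (e i)) (v (e j)) = 0 := hv hne
            simp only [LinearMap.BilinForm.restrict_apply,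
              LinearMap.domRestrict_apply, hBapp] at h0
            rw [h0, mul_zero]
    -- build the matrix
    set A₀ : Matrix (Fin (m+1)) (Fin (m+1)) ℂ := Matrix.of u with hA₀
    have hA0 : A₀ * A₀ᵀ = 1 := by
      ext i j
      rw [Matrix.mul_apply]
      simp only [hA₀, Matrix.transpose_apply, Matrix.of_apply]
      rw [horth i j]
      by_cases h : i = j <;> simp [h, Matrix.one_apply]
    set d : ℂ := A₀.det with hd_def
    have hdd : d * d = 1 := by
      have := congrArg Matrix.det hA0
      rwa [Matrix.det_mul, Matrix.det_transpose, Matrix.det_one] at this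
    set i1 : Fin (m+1) := ⟨1, by omega⟩ with hi1
    have hi10 : i1 ≠ 0 := by simp [hi1, Fin.ext_iff]
    set A : Matrix (Fin (m+1)) (Fin (m+1)) ℂ := A₀.updateRow i1 (d • A₀ i1) with hA
    have hA_apply : ∀ i k, A i k = (if i = i1 then d else 1) * u i k := by
      intro i k
      by_cases h : i = i1 <;>
        simp [hA, hA₀, Matrix.updateRow_apply, h, smul_eq_mul]
    -- A z = s e₀
    have hmv0 : ∀ j, (A₀ *ᵥ z) j = if j = 0 then s else 0 := by
      intro j
      rw [Matrix.mulVec, dotProduct]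
      simp only [hA₀, Matrix.of_apply]
      induction j using Fin.cases with
      | zero =>
        rw [if_pos rfl]
        simp only [hu, Fin.cons_zero, Pi.smul_apply, smul_eq_mul]
        have h1 : ∑ k, s⁻¹ * z k * z k = s⁻¹ * ∑ k, z k * z k := by
          rw [Finset.mul_sum]; apply Finset.sum_congr rfl; intro k _; ring
        have h2 : ∑ k, z k * z k = s * s := by
          rw [hs]; apply Finset.sum_congr rfl; intro k _; rw [sq]
        rw [h1, h2]
        field_simp
      | succ j =>
        rw [if_neg (Fin.succ_ne_zero j)]
        simp only [hu, Fin.cons_succ, Pi.smul_apply, smul_eq_mul]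
        have h1 : ∑ k, (t (e j))⁻¹ * (v (e j) : Fin (m+1) → ℂ) k * z k
            = (t (e j))⁻¹ * ∑ k, z k * (v (e j) : Fin (m+1) → ℂ) k := by
          rw [Finset.mul_sum]; apply Finset.sum_congr rfl; intro k _; ring
        rw [h1, hzw (v (e j)), mul_zero]
    have hmv : ∀ j, (A *ᵥ z) j = if j = 0 then s else 0 := by
      intro j
      rw [Matrix.mulVec, dotProduct]
      have h1 : ∑ k, A j k * z k
          = (if j = i1 then d else 1) * ∑ k, u j k * z k := by
        rw [Finset.mul_sum]; apply Finset.sum_congr rfl; intro k _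
        rw [hA_apply]; ring
      have h2 : ∑ k, u j k * z k = if j = 0 then s else 0 := by
        have := hmv0 j
        rw [Matrix.mulVec, dotProduct] at this
        simpa [hA₀] using this
      rw [h1, h2]
      by_cases h : j = i1
      · subst h
        rw [if_pos rfl, if_neg hi10, mul_zero]
      · rw [if_neg h, one_mul]
    -- A ∈ SO(n, ℂ)
    have hAAt : A * Aᵀ = 1 := by
      ext i j
      rw [Matrix.mul_apply]
      have h1 : ∑ k, A i k * Aᵀ k j
          = (if i = i1 then d else 1) * (if j = i1 then d else 1)
            * ∑ k, u i k * u j k := by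
        rw [Finset.mul_sum]; apply Finset.sum_congr rfl; intro k _
        rw [Matrix.transpose_apply, hA_apply, hA_apply]; ring
      rw [h1, horth i j]
      by_cases h : i = j
      · subst h
        rw [if_pos rfl, Matrix.one_apply_eq]
        by_cases h2 : i = i1 <;> simp [h2, hdd]
      · rw [if_neg h, mul_zero, Matrix.one_apply_ne h]
    have hdetA : A.det = 1 := by
      rw [hA, Matrix.det_updateRow_smul, Matrix.updateRow_eq_self, ← hd_def, hdd]
    refine ⟨A, mul_eq_one_comm.mp hAAt, hdetA, ?_⟩
    intro j k
    rw [hmv j, hmv k]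
    by_cases hj : j = 0 <;> by_cases hk : k = 0 <;>
      simp [hj, hk]
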